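/- Let (T_n) be a sequence of operators on an increasing chain of Hilbert spaces, uniformly bounded in norm, such that each T_{n+1} dilates T_n, and suppose infinitely many of the T_n are isometries and infinitely many of the adjoints T_n* are isometries (i.e., infinitely many T_n are co-isometries). Then the SOT limit T of T_n P_n is a unitary, and T is a power dilation of every T_n. -/

import Mathlib

open ContinuousLinearMap Filter Topology

section Aux

variable {H : Type*} [NormedAddCommGroup H] [InnerProductSpace ℂ H] [CompleteSpace H]

local notation "⟪" x ", " y "⟫" => @inner ℂ _ _ x y

private lemma aux_mem_range_iff {Q : H →L[ℂ] H} (hQ : IsIdempotentElem Q) {x : H} :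
    x ∈ LinearMap.range (Q : H →ₗ[ℂ] H) ↔ Q x = x := by
  constructor
  · rintro ⟨y, rfl⟩
    have h := congrArg (fun f : H →L[ℂ] H => f y) hQ
    simpa [ContinuousLinearMap.mul_apply] using h
  · intro h; exact ⟨x, h⟩

/-- The core SOT-limit lemma, applied to `T` and to `adjoint ∘ T`. -/
private lemma chain_limit (P B : ℕ → H →L[ℂ] H) (c : ℝ)
    (hPproj : ∀ n, IsIdempotentElem (P n)) (hPsa : ∀ n, IsSelfAdjoint (P n))
    (hPmono : ∀ m n, m ≤ n → P n ∘L P m = P m)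
    (hdense : (⨆ n, LinearMap.range (P n : H →ₗ[ℂ] H)).topologicalClosure = ⊤)
    (hsupp : ∀ n, B n ∘L P n = B n)
    (hnorm : ∀ n, ‖B n‖ ≤ c)
    (hdil1 : ∀ m n, m ≤ n → ∀ h ∈ LinearMap.range (P m : H →ₗ[ℂ] H), P m (B n h) = B m h)
    (hiso : ∃ᶠ n in atTop, ∀ x ∈ LinearMap.range (P n : H →ₗ[ℂ] H), ‖B n x‖ = ‖x‖) :
    ∃ S : H →L[ℂ] H, (∀ x, Tendsto (fun n => B n (P n x)) atTop (𝓝 (S x))) ∧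
      ∀ x, ‖S x‖ = ‖x‖ := by
  have hc : 0 ≤ c := le_trans (norm_nonneg _) (hnorm 0)
  -- basic facts about the projections
  have hfix : ∀ m n, m ≤ n → ∀ x ∈ LinearMap.range (P m : H →ₗ[ℂ] H), P n x = x := by
    intro m n hmn x hx
    have hx' := (aux_mem_range_iff (hPproj m)).1 hx
    calc P n x = (P n ∘L P m) x := by rw [ContinuousLinearMap.comp_apply, hx']
    _ = P m x := by rw [hPmono m n hmn]
    _ = x := hx'
  have hsub : ∀ m n, m ≤ n → ∀ x ∈ LinearMap.range (P m : H →ₗ[ℂ] H), x ∈ LinearMap.range (P n : H →ₗ[ℂ] H) :=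
    fun m n h x hx => (aux_mem_range_iff (hPproj n)).2 (hfix m n h x hx)
  have hmemU : ∀ x, x ∈ (⨆ n, LinearMap.range (P n : H →ₗ[ℂ] H) : Submodule ℂ H) →
      ∃ m, x ∈ LinearMap.range (P m : H →ₗ[ℂ] H) := by
    intro x hx
    exact (Submodule.mem_iSup_of_chain
      ⟨fun n => LinearMap.range (P n : H →ₗ[ℂ] H), fun a b hab y hy => hsub a b hab y hy⟩ x).1 hx
  -- Pythagoras
  have hidem : ∀ m (y : H), P m (P m y) = P m y := by
    intro m y
    have h := congrArg (fun f : H →L[ℂ] H => f y) (hPproj m)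
    simpa [ContinuousLinearMap.mul_apply] using h
  have hpyth : ∀ m n, m ≤ n → ∀ x ∈ LinearMap.range (P m : H →ₗ[ℂ] H),
      ‖B n x - B m x‖ ^ 2 = ‖B n x‖ ^ 2 - ‖B m x‖ ^ 2 := by
    intro m n hmn x hx
    have hBm : B m x = P m (B n x) := (hdil1 m n hmn x hx).symm
    set y := B n x with hy
    have key : ⟪y, P m y⟫ = ⟪P m y, P m y⟫ := by
      have e1 : ⟪P m y, P m y⟫ = ⟪y, P m (P m y)⟫ := by
        nth_rw 1 [← (hPsa m).adjoint_eq]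
        exact ContinuousLinearMap.adjoint_inner_left (P m) (P m y) y
      rw [e1, hidem m y]
    have hre : RCLike.re ⟪y, P m y⟫ = ‖P m y‖ ^ 2 := by
      rw [key, @inner_self_eq_norm_sq ℂ]
    rw [hBm, @norm_sub_sq ℂ, hre]
    ring
  -- monotone norms
  have hmonoN : ∀ m x, x ∈ LinearMap.range (P m : H →ₗ[ℂ] H) → ∀ n n', m ≤ n → n ≤ n' →
      ‖B n x‖ ≤ ‖B n' x‖ := by
    intro m x hx n n' hmn hnn'
    have h := hpyth n n' hnn' x (hsub m n hmn x hx)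
    nlinarith [sq_nonneg ‖B n' x - B n x‖, norm_nonneg (B n x), norm_nonneg (B n' x)]
  -- Cauchy on each subspace
  have hcauchy0 : ∀ m x, x ∈ LinearMap.range (P m : H →ₗ[ℂ] H) → CauchySeq (fun n => B n x) := by
    intro m x hx
    set g : ℕ → ℝ := fun j => ‖B (m + j) x‖ ^ 2 with hg
    have hgmono : Monotone g := by
      intro j l hjl
      have h := hmonoN m x hx (m + j) (m + l) (Nat.le_add_right _ _) (by omega)
      exact pow_le_pow_left₀ (norm_nonneg _) h 2
    have hgbdd : BddAbove (Set.range g) := by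
      refine ⟨(c * ‖x‖) ^ 2, ?_⟩
      rintro r ⟨j, rfl⟩
      have h1 : ‖B (m + j) x‖ ≤ c * ‖x‖ :=
        le_trans ((B (m + j)).le_opNorm x)
          (mul_le_mul_of_nonneg_right (hnorm _) (norm_nonneg _))
      exact pow_le_pow_left₀ (norm_nonneg _) h1 2
    have hgc : CauchySeq g := (tendsto_atTop_ciSup hgmono hgbdd).cauchySeq
    rw [Metric.cauchySeq_iff] at hgc ⊢
    intro ε hε
    obtain ⟨N, hN⟩ := hgc (ε ^ 2) (by positivity)
    refine ⟨m + N, ?_⟩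
    have main : ∀ a, m + N ≤ a → ∀ b, m + N ≤ b → b ≤ a →
        dist (B a x) (B b x) < ε := by
      intro a ha b hb hba
      have hxb : x ∈ LinearMap.range (P b : H →ₗ[ℂ] H) := hsub m b (by omega) x hx
      have h1 : ‖B a x - B b x‖ ^ 2 = g (a - m) - g (b - m) := by
        have h := hpyth b a hba x hxb
        have e1 : m + (a - m) = a := by omega
        have e2 : m + (b - m) = b := by omega
        simp only [hg, e1, e2]
        exact h
      have h2 : |g (a - m) - g (b - m)| < ε ^ 2 := by
        have := hN (a - m) (by omega) (b - m) (by omega)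
        rwa [Real.dist_eq] at this
      have h3 : ‖B a x - B b x‖ ^ 2 < ε ^ 2 := by
        rw [h1]
        exact lt_of_le_of_lt (le_abs_self _) h2
      rw [dist_eq_norm]
      exact lt_of_pow_lt_pow_left₀ 2 hε.le h3
    intro a ha b hb
    rcases le_total b a with hba | hab
    · exact main a ha b hb hba
    · rw [dist_comm]; exact main b hb a ha hab
  -- uniform bound
  have hBP : ∀ n (y : H), ‖B n (P n y)‖ ≤ c * ‖y‖ := by
    intro n y
    have h0 : B n (P n y) = B n y := by
      have h := congrArg (fun f : H →L[ℂ] H => f y) (hsupp n)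
      simpa using h
    rw [h0]
    exact le_trans ((B n).le_opNorm y) (mul_le_mul_of_nonneg_right (hnorm _) (norm_nonneg _))
  have hdense' : Dense (↑(⨆ n, LinearMap.range (P n : H →ₗ[ℂ] H) : Submodule ℂ H) : Set H) :=
    Submodule.dense_iff_topologicalClosure_eq_top.mpr hdense
  -- Cauchy everywhere
  have hcauchy : ∀ x, CauchySeq (fun n => B n (P n x)) := by
    intro x
    rw [Metric.cauchySeq_iff]
    intro ε hε
    have hpos : (0:ℝ) < ε / (3 * (c + 1)) := by positivity
    obtain ⟨h, hhmem, hh⟩ := Metric.mem_closure_iff.1 (hdense'.closure_eq ▸ Set.mem_univ x)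
      (ε / (3 * (c + 1))) hpos
    obtain ⟨m, hm⟩ := hmemU h hhmem
    have hch := hcauchy0 m h hm
    rw [Metric.cauchySeq_iff] at hch
    obtain ⟨N, hN⟩ := hch (ε / 3) (by positivity)
    refine ⟨max N m, fun a ha b hb => ?_⟩
    have hPa : P a h = h := hfix m a (le_trans (le_max_right _ _) ha) h hm
    have hPb : P b h = h := hfix m b (le_trans (le_max_right _ _) hb) h hm
    have hterm : ∀ j, ‖B j (P j x) - B j (P j h)‖ < ε / 3 := by
      intro j
      have e1 : B j (P j x) - B j (P j h) = B j (P j (x - h)) := by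
        rw [map_sub, map_sub]
      rw [e1]
      calc ‖B j (P j (x - h))‖ ≤ c * ‖x - h‖ := hBP j (x - h)
        _ ≤ (c + 1) * ‖x - h‖ := by nlinarith [norm_nonneg (x - h)]
        _ < (c + 1) * (ε / (3 * (c + 1))) := by
            have := hh
            rw [dist_eq_norm] at this
            exact mul_lt_mul_of_pos_left this (by positivity)
        _ = ε / 3 := by field_simp
    have hmid : dist (B a (P a h)) (B b (P b h)) < ε / 3 := by
      rw [hPa, hPb]
      exact hN a (le_trans (le_max_left _ _) ha) b (le_trans (le_max_left _ _) hb)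
    calc dist (B a (P a x)) (B b (P b x))
        ≤ dist (B a (P a x)) (B a (P a h)) + dist (B a (P a h)) (B b (P b h)) +
          dist (B b (P b h)) (B b (P b x)) := dist_triangle4 _ _ _ _
      _ < ε / 3 + ε / 3 + ε / 3 := by
          refine add_lt_add (add_lt_add ?_ hmid) ?_
          · rw [dist_eq_norm]; exact hterm a
          · rw [dist_comm, dist_eq_norm]; exact hterm b
      _ = ε := by ring
  -- the limit function
  set f : H → H := fun x => limUnder atTop (fun n => B n (P n x)) with hf
  have hlim : ∀ x, Tendsto (fun n => B n (P n x)) atTop (𝓝 (f x)) :=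
    fun x => (hcauchy x).tendsto_limUnder
  have hadd : ∀ x y, f (x + y) = f x + f y := by
    intro x y
    refine tendsto_nhds_unique (hlim (x + y)) ?_
    have h := (hlim x).add (hlim y)
    refine h.congr fun n => ?_
    simp [map_add]
  have hsmul : ∀ (a : ℂ) (x : H), f (a • x) = a • f x := by
    intro a x
    refine tendsto_nhds_unique (hlim (a • x)) ?_
    have h := (hlim x).const_smul a
    refine h.congr fun n => ?_
    simp [map_smul]
  have hbound : ∀ x, ‖f x‖ ≤ c * ‖x‖ := by
    intro x
    exact le_of_tendsto (hlim x).norm (Filter.Eventually.of_forall fun n => hBP n x)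
  set S : H →L[ℂ] H :=
    LinearMap.mkContinuous
      { toFun := f, map_add' := hadd, map_smul' := fun a x => by simpa using hsmul a x } c
      hbound with hSdef
  have hSapp : ∀ x, S x = f x := fun x => rfl
  -- isometry on the union
  have hisoU : ∀ m x, x ∈ LinearMap.range (P m : H →ₗ[ℂ] H) → ‖f x‖ = ‖x‖ := by
    intro m x hx
    obtain ⟨n₀, hn₀iso, hmn₀⟩ := (hiso.and_eventually (eventually_ge_atTop m)).exists
    have heq : ∀ n, n₀ ≤ n → ‖B n x‖ = ‖x‖ := by
      intro n hn
      have hle : ‖B n x‖ ≤ ‖x‖ := by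
        obtain ⟨n₁, hn₁iso, hnn₁⟩ := (hiso.and_eventually (eventually_ge_atTop n)).exists
        calc ‖B n x‖ ≤ ‖B n₁ x‖ := hmonoN m x hx n n₁ (le_trans hmn₀ hn) hnn₁
          _ = ‖x‖ := hn₁iso x (hsub m n₁ (le_trans (le_trans hmn₀ hn) hnn₁) x hx)
      have hge : ‖x‖ ≤ ‖B n x‖ := by
        calc ‖x‖ = ‖B n₀ x‖ := (hn₀iso x (hsub m n₀ hmn₀ x hx)).symm
          _ ≤ ‖B n x‖ := hmonoN m x hx n₀ n hmn₀ hn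
      linarith
    have h1 : Tendsto (fun n => ‖B n (P n x)‖) atTop (𝓝 ‖f x‖) := (hlim x).norm
    have h2 : (fun n => ‖B n (P n x)‖) =ᶠ[atTop] fun _ => ‖x‖ := by
      filter_upwards [eventually_ge_atTop n₀, eventually_ge_atTop m] with n hn hn'
      rw [hfix m n hn' x hx, heq n hn]
    exact tendsto_nhds_unique (h1.congr' h2) tendsto_const_nhds
  have hisoAll : ∀ x, ‖S x‖ = ‖x‖ := by
    have hclosed : IsClosed {y : H | ‖S y‖ = ‖y‖} :=
      isClosed_eq S.continuous.norm continuous_norm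
    have hsubset : (↑(⨆ n, LinearMap.range (P n : H →ₗ[ℂ] H) : Submodule ℂ H) : Set H) ⊆
        {y : H | ‖S y‖ = ‖y‖} := by
      intro y hy
      obtain ⟨m, hm⟩ := hmemU y hy
      exact hisoU m y hm
    intro x
    have := hclosed.closure_subset_iff.2 hsubset
    exact this (hdense'.closure_eq ▸ Set.mem_univ x)
  exact ⟨S, fun x => hlim x, hisoAll⟩

end Aux

/-- If `(T n)` is a uniformly bounded chain of power dilations on increasing closed
subspaces `H_n = range (P n)`, infinitely many `T n` are isometries and infinitely many
`T n` are co-isometries (their adjoints are isometries on `H_n`), then the SOT limit `S`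
of `T n ∘ P n` exists, is a unitary (an isometry with isometric adjoint), and is a power
dilation of every `T n`. -/
theorem stmt9 {H : Type*} [NormedAddCommGroup H] [InnerProductSpace ℂ H] [CompleteSpace H]
    (P T : ℕ → H →L[ℂ] H) (c : ℝ)
    (hPproj : ∀ n, IsIdempotentElem (P n)) (hPsa : ∀ n, IsSelfAdjoint (P n))
    (hPmono : ∀ m n, m ≤ n → P n ∘L P m = P m)
    (hdense : (⨆ n, LinearMap.range (P n : H →ₗ[ℂ] H)).topologicalClosure = ⊤)
    (hsupp : ∀ n, P n ∘L T n = T n ∧ T n ∘L P n = T n)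
    (hnorm : ∀ n, ‖T n‖ ≤ c)
    (hdil : ∀ n k, ∀ h ∈ LinearMap.range (P n : H →ₗ[ℂ] H),
      P n ((T (n + 1) ^ k) h) = ((T n ^ k) h))
    (hiso : ∃ᶠ n in atTop, ∀ x ∈ LinearMap.range (P n : H →ₗ[ℂ] H), ‖T n x‖ = ‖x‖)
    (hcoiso : ∃ᶠ n in atTop, ∀ x ∈ LinearMap.range (P n : H →ₗ[ℂ] H), ‖adjoint (T n) x‖ = ‖x‖) :
    ∃ S : H →L[ℂ] H,
      (∀ x : H, Tendsto (fun n => T n (P n x)) atTop (𝓝 (S x))) ∧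
      (∀ x : H, ‖S x‖ = ‖x‖) ∧ (∀ x : H, ‖adjoint S x‖ = ‖x‖) ∧
      (∀ n k, ∀ h ∈ LinearMap.range (P n : H →ₗ[ℂ] H), P n ((S ^ k) h) = ((T n ^ k) h)) := by
  have hsupp1 : ∀ n, P n ∘L T n = T n := fun n => (hsupp n).1
  have hsupp2 : ∀ n, T n ∘L P n = T n := fun n => (hsupp n).2
  have hfix : ∀ m n, m ≤ n → ∀ x ∈ LinearMap.range (P m : H →ₗ[ℂ] H), P n x = x := by
    intro m n hmn x hx
    have hx' := (aux_mem_range_iff (hPproj m)).1 hx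
    calc P n x = (P n ∘L P m) x := by rw [ContinuousLinearMap.comp_apply, hx']
    _ = P m x := by rw [hPmono m n hmn]
    _ = x := hx'
  have hsub : ∀ m n, m ≤ n → ∀ x ∈ LinearMap.range (P m : H →ₗ[ℂ] H), x ∈ LinearMap.range (P n : H →ₗ[ℂ] H) :=
    fun m n h x hx => (aux_mem_range_iff (hPproj n)).2 (hfix m n h x hx)
  have hPcomm : ∀ m n, m ≤ n → P m ∘L P n = P m := by
    intro m n hmn
    have h := congrArg ContinuousLinearMap.adjoint (hPmono m n hmn)
    rwa [ContinuousLinearMap.adjoint_comp, (hPsa m).adjoint_eq, (hPsa n).adjoint_eq] at h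
  -- chained dilation
  have hdilc : ∀ m n, m ≤ n → ∀ k, ∀ h ∈ LinearMap.range (P m : H →ₗ[ℂ] H),
      P m ((T n ^ k) h) = (T m ^ k) h := by
    intro m n hmn
    induction n, hmn using Nat.le_induction with
    | base =>
      intro k h hh
      cases k with
      | zero => simpa using (aux_mem_range_iff (hPproj m)).1 hh
      | succ k =>
        have e1 : (T m ^ (k + 1)) h = T m ((T m ^ k) h) := by
          rw [pow_succ']; rfl
        rw [e1]
        have h2 := congrArg (fun f : H →L[ℂ] H => f ((T m ^ k) h)) (hsupp1 m)
        simpa using h2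
    | succ n hmn ih =>
      intro k h hh
      have hhn : h ∈ LinearMap.range (P n : H →ₗ[ℂ] H) := hsub m n hmn h hh
      calc P m ((T (n + 1) ^ k) h) = (P m ∘L P n) ((T (n + 1) ^ k) h) := by
            rw [hPcomm m n hmn]
        _ = P m (P n ((T (n + 1) ^ k) h)) := rfl
        _ = P m ((T n ^ k) h) := by rw [hdil n k h hhn]
        _ = (T m ^ k) h := ih k h hh
  have hdil1T : ∀ m n, m ≤ n → ∀ h ∈ LinearMap.range (P m : H →ₗ[ℂ] H), P m (T n h) = T m h := by
    intro m n hmn h hh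
    have := hdilc m n hmn 1 h hh
    simpa using this
  -- apply the chain limit lemma to T
  obtain ⟨S, hlimS, hisoS⟩ := chain_limit P T c hPproj hPsa hPmono hdense hsupp2 hnorm hdil1T hiso
  -- the adjoint family
  set A : ℕ → H →L[ℂ] H := fun n => ContinuousLinearMap.adjoint (T n) with hA
  have hsuppA : ∀ n, A n ∘L P n = A n := by
    intro n
    have h := congrArg ContinuousLinearMap.adjoint (hsupp1 n)
    rwa [ContinuousLinearMap.adjoint_comp, (hPsa n).adjoint_eq] at h
  have hsuppA' : ∀ n, P n ∘L A n = A n := by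
    intro n
    have h := congrArg ContinuousLinearMap.adjoint (hsupp2 n)
    rwa [ContinuousLinearMap.adjoint_comp, (hPsa n).adjoint_eq] at h
  have hnormA : ∀ n, ‖A n‖ ≤ c := by
    intro n
    rw [hA]
    rw [LinearIsometryEquiv.norm_map ContinuousLinearMap.adjoint (T n)]
    exact hnorm n
  have hidem : ∀ m (y : H), P m (P m y) = P m y := by
    intro m y
    have h := congrArg (fun f : H →L[ℂ] H => f y) (hPproj m)
    simpa [ContinuousLinearMap.mul_apply] using h
  have hdil1A : ∀ m n, m ≤ n → ∀ g ∈ LinearMap.range (P m : H →ₗ[ℂ] H), P m (A n g) = A m g := by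
    intro m n hmn g hg
    have hgfix : P m g = g := (aux_mem_range_iff (hPproj m)).1 hg
    have hAm : P m (A m g) = A m g := by
      have h := congrArg (fun f : H →L[ℂ] H => f g) (hsuppA' m)
      simpa using h
    have key : ∀ h : H, P m h = h →
        (inner ℂ h (P m (A n g)) : ℂ) = inner ℂ h (A m g) := by
      intro h hh
      have e1 : (inner ℂ h (P m (A n g)) : ℂ) = inner ℂ (P m h) (A n g) := by
        nth_rw 1 [← (hPsa m).adjoint_eq]
        exact ContinuousLinearMap.adjoint_inner_right (P m) h (A n g)
      have e2 : (inner ℂ (P m h) (A n g) : ℂ) = inner ℂ h (A n g) := by rw [hh]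
      have e3 : (inner ℂ h (A n g) : ℂ) = inner ℂ (T n h) g :=
        ContinuousLinearMap.adjoint_inner_right (T n) h g
      have e4 : (inner ℂ (T n h) g : ℂ) = inner ℂ (P m (T n h)) g := by
        have e4' : (inner ℂ (T n h) (P m g) : ℂ) = inner ℂ (P m (T n h)) g := by
          nth_rw 1 [← (hPsa m).adjoint_eq]
          exact ContinuousLinearMap.adjoint_inner_right (P m) (T n h) g
        rw [← e4', hgfix]
      have e5 : P m (T n h) = T m h :=
        hdil1T m n hmn h ((aux_mem_range_iff (hPproj m)).2 hh)
      have e6 : (inner ℂ (T m h) g : ℂ) = inner ℂ h (A m g) :=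
        (ContinuousLinearMap.adjoint_inner_right (T m) h g).symm
      rw [e1, e2, e3, e4, e5, e6]
    set d : H := P m (A n g) - A m g with hd
    have hdfix : P m d = d := by
      rw [hd, map_sub, hidem, hAm]
    have hzero : (inner ℂ d d : ℂ) = 0 := by
      have h := key d hdfix
      rw [hd]
      rw [inner_sub_right]
      rw [h]
      ring
    have : d = 0 := inner_self_eq_zero.1 hzero
    exact sub_eq_zero.1 this
  obtain ⟨S', hlimS', hisoS'⟩ :=
    chain_limit P A c hPproj hPsa hPmono hdense hsuppA hnormA hdil1A hcoiso
  -- identify S' with the adjoint of S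
  have hSadj : ∀ y, ContinuousLinearMap.adjoint S y = S' y := by
    intro y
    refine ext_inner_right ℂ fun v => ?_
    have l1 : (inner ℂ (ContinuousLinearMap.adjoint S y) v : ℂ) = inner ℂ y (S v) :=
      ContinuousLinearMap.adjoint_inner_left S v y
    have l2 : Tendsto (fun n => (inner ℂ (A n (P n y)) v : ℂ)) atTop
        (𝓝 (inner ℂ (S' y) v : ℂ)) := (hlimS' y).inner tendsto_const_nhds
    have l3 : ∀ n, (inner ℂ (A n (P n y)) v : ℂ) = inner ℂ y (T n (P n v)) := by
      intro n
      have e1 : (inner ℂ (A n (P n y)) v : ℂ) = inner ℂ (P n y) (T n v) :=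
        ContinuousLinearMap.adjoint_inner_left (T n) v (P n y)
      have e2 : (inner ℂ (P n y) (T n v) : ℂ) = inner ℂ y (P n (T n v)) := by
        nth_rw 1 [← (hPsa n).adjoint_eq]
        exact ContinuousLinearMap.adjoint_inner_left (P n) (T n v) y
      have e3 : P n (T n v) = T n v := by
        have h := congrArg (fun f : H →L[ℂ] H => f v) (hsupp1 n)
        simpa using h
      have e4 : T n v = T n (P n v) := by
        have h := congrArg (fun f : H →L[ℂ] H => f v) (hsupp2 n)
        simpa using h.symm
      rw [e1, e2, e3, e4]
    have l4 : Tendsto (fun n => (inner ℂ y (T n (P n v)) : ℂ)) atTop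
        (𝓝 (inner ℂ y (S v) : ℂ)) := Tendsto.inner tendsto_const_nhds (hlimS v)
    have l5 : (inner ℂ (S' y) v : ℂ) = inner ℂ y (S v) :=
      tendsto_nhds_unique (l2.congr l3) l4
    rw [l1, l5]
  have hadjiso : ∀ x, ‖ContinuousLinearMap.adjoint S x‖ = ‖x‖ := by
    intro x
    rw [hSadj x]
    exact hisoS' x
  -- powers converge
  have hc : 0 ≤ c := le_trans (norm_nonneg _) (hnorm 0)
  have hpow : ∀ (h : H) (k : ℕ), Tendsto (fun n => (T n ^ k) h) atTop (𝓝 ((S ^ k) h)) := by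
    intro h k
    induction k with
    | zero => simpa using tendsto_const_nhds
    | succ k ih =>
      have e1 : Tendsto (fun n => T n (P n ((S ^ k) h))) atTop (𝓝 (S ((S ^ k) h))) :=
        hlimS ((S ^ k) h)
      have e2 : Tendsto (fun n => (T n ^ (k + 1)) h - T n (P n ((S ^ k) h))) atTop (𝓝 0) := by
        have hb : ∀ n, ‖(T n ^ (k + 1)) h - T n (P n ((S ^ k) h))‖ ≤
            c * ‖(T n ^ k) h - (S ^ k) h‖ := by
          intro n
          have f1 : (T n ^ (k + 1)) h = T n ((T n ^ k) h) := by
            rw [pow_succ']; rfl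
          have f2 : T n (P n ((S ^ k) h)) = T n ((S ^ k) h) := by
            have hh := congrArg (fun f : H →L[ℂ] H => f ((S ^ k) h)) (hsupp2 n)
            simpa using hh
          rw [f1, f2, ← map_sub]
          exact le_trans ((T n).le_opNorm _)
            (mul_le_mul_of_nonneg_right (hnorm n) (norm_nonneg _))
        have hg : Tendsto (fun n => c * ‖(T n ^ k) h - (S ^ k) h‖) atTop (𝓝 0) := by
          have h0 : Tendsto (fun n => (T n ^ k) h - (S ^ k) h) atTop (𝓝 0) := by
            simpa using ih.sub_const ((S ^ k) h)
          have := (h0.norm).const_mul c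
          simpa using this
        exact squeeze_zero_norm hb hg
      have e3 : Tendsto (fun n => (T n ^ (k + 1)) h) atTop (𝓝 (0 + S ((S ^ k) h))) := by
        have := e2.add e1
        refine this.congr fun n => ?_
        abel
      have e4 : (S ^ (k + 1)) h = S ((S ^ k) h) := by
        rw [pow_succ']; rfl
      rw [e4]
      simpa using e3
  have hfinal : ∀ n k, ∀ h ∈ LinearMap.range (P n : H →ₗ[ℂ] H), P n ((S ^ k) h) = (T n ^ k) h := by
    intro n k h hh
    have t1 : Tendsto (fun j => P n ((T j ^ k) h)) atTop (𝓝 (P n ((S ^ k) h))) :=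
      ((P n).continuous.tendsto _).comp (hpow h k)
    have t2 : (fun j => P n ((T j ^ k) h)) =ᶠ[atTop] fun _ => (T n ^ k) h := by
      filter_upwards [eventually_ge_atTop n] with j hj
      exact hdilc n j hj k h hh
    exact tendsto_nhds_unique (t1.congr' t2) tendsto_const_nhds
  exact ⟨S, hlimS, hisoS, hadjiso, hfinal⟩
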